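/- Let τ > 0 and σ > 1, and set M_0 = 1, M_p = p^{τ p^σ} for integers p ≥ 1. Then for every integer p ≥ 1 one has M_{p-1}/M_p ≤ (2p)^{-τ (p-1)^{σ-1}}, and consequently the series ∑_{p=1}^{∞} M_{p-1}/M_p converges. -/
import Mathlib

open Real Filter

-- step lemma: for 1 ≤ x, x^σ + x^(σ-1) ≤ (x+1)^σ
lemma aux_pow_step {σ : ℝ} (hσ : 1 ≤ σ) {x : ℝ} (hx : 1 ≤ x) :
    x ^ σ + x ^ (σ - 1) ≤ (x + 1) ^ σ := by
  have hx0 : 0 < x := by linarith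
  have hb : 1 + σ * (1/x) ≤ (1 + 1/x) ^ σ :=
    one_add_mul_self_le_rpow_one_add (by have := one_div_pos.mpr hx0; linarith) hσ
  have h1 : (x + 1) ^ σ = x ^ σ * (1 + 1/x) ^ σ := by
    rw [← Real.mul_rpow hx0.le (by positivity)]
    congr 1
    field_simp
  have h2 : x ^ σ * (1 + σ * (1/x)) ≤ (x+1) ^ σ := by
    rw [h1]
    exact mul_le_mul_of_nonneg_left hb (by positivity)
  have h3 : x ^ (σ - 1) = x ^ σ / x := by
    rw [Real.rpow_sub hx0, Real.rpow_one]
  have h4 : x ^ σ * (1 + σ * (1/x)) = x ^ σ + σ * (x ^ σ / x) := by ring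
  have h5 : x ^ σ / x ≤ σ * (x ^ σ / x) := le_mul_of_one_le_left (by positivity) hσ
  rw [h3]; nlinarith

-- log 2 ≤ x * log(1 + 1/x) for x ≥ 1, i.e. 2^(1/x) ≤ 1 + 1/x
lemma aux_log_step {x : ℝ} (hx : 1 ≤ x) : Real.log 2 ≤ x * Real.log (1 + 1/x) := by
  have hx0 : 0 < x := by linarith
  have ht0 : 0 < 1/x := by positivity
  have ht1 : 1/x ≤ 1 := by rw [div_le_one hx0]; linarith
  have h2 : (2:ℝ) ^ (1/x) ≤ 1 + 1/x := by
    have := rpow_one_add_le_one_add_mul_self (s := 1) (by norm_num) ht0.le ht1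
    norm_num at this
    simpa [mul_one] using this
  have hlog : Real.log ((2:ℝ) ^ (1/x)) ≤ Real.log (1 + 1/x) :=
    Real.log_le_log (by positivity) h2
  rw [Real.log_rpow (by norm_num)] at hlog
  calc Real.log 2 = x * (1/x * Real.log 2) := by field_simp
    _ ≤ x * Real.log (1 + 1/x) := by
        exact mul_le_mul_of_nonneg_left hlog hx0.le

-- key inequality for real P ≥ 2, Q = P - 1
lemma aux_key {σ : ℝ} (hσ : 1 < σ) {P : ℝ} (hP : 2 ≤ P) :
    (P-1) ^ σ * Real.log (P-1) + (P-1) ^ (σ-1) * Real.log (2*P)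
      ≤ P ^ σ * Real.log P := by
  set Q := P - 1 with hQdef
  have hQ : 1 ≤ Q := by simp [hQdef]; linarith
  have hQ0 : 0 < Q := by linarith
  have hP0 : 0 < P := by linarith
  have hPQ : P = Q + 1 := by ring
  have hlogP : 0 ≤ Real.log P := Real.log_nonneg (by linarith)
  -- step 1: Q^(σ-1) * log 2 ≤ Q^σ * (log P - log Q)
  have hstep1 : Q ^ (σ-1) * Real.log 2 ≤ Q ^ σ * (Real.log P - Real.log Q) := by
    have h1 : Real.log P - Real.log Q = Real.log (1 + 1/Q) := by
      rw [← Real.log_div hP0.ne' hQ0.ne']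
      congr 1
      field_simp
      linarith
    have h2 := aux_log_step hQ
    have h3 : Q ^ σ = Q ^ (σ-1) * Q := by
      rw [← Real.rpow_add_one hQ0.ne']; ring_nf
    rw [h1, h3]
    calc Q ^ (σ-1) * Real.log 2 ≤ Q ^ (σ-1) * (Q * Real.log (1 + 1/Q)) :=
          mul_le_mul_of_nonneg_left h2 (by positivity)
      _ = Q ^ (σ-1) * Q * Real.log (1 + 1/Q) := by ring
  -- step 2: Q^(σ-1) * log P ≤ (P^σ - Q^σ) * log P
  have hstep2 : Q ^ (σ-1) * Real.log P ≤ (P ^ σ - Q ^ σ) * Real.log P := by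
    have h := aux_pow_step hσ.le hQ
    rw [← hPQ] at h
    exact mul_le_mul_of_nonneg_right (by linarith) hlogP
  have hsplit : Real.log (2*P) = Real.log 2 + Real.log P :=
    Real.log_mul (by norm_num) hP0.ne'
  rw [hsplit]
  nlinarith [hstep1, hstep2]

/-- property (M.3)′ of the sequence M_p = p^{τ p^σ} (M_0 = 1, via the
real-power convention 0 ^ 0 = 1): M_{p-1}/M_p ≤ (2p)^{-τ(p-1)^{σ-1}} for p ≥ 1, and the
series ∑_{p≥1} M_{p-1}/M_p converges. -/
theorem extended_gevrey_M3_prime (τ σ : ℝ) (hτ : 0 < τ) (hσ : 1 < σ)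
    (M : ℕ → ℝ) (hM : ∀ p : ℕ, M p = (p : ℝ) ^ (τ * (p : ℝ) ^ σ)) :
    (∀ p : ℕ, 1 ≤ p →
        M (p - 1) / M p ≤ ((2 * p : ℕ) : ℝ) ^ (-(τ * ((p : ℝ) - 1) ^ (σ - 1)))) ∧
      Summable (fun p : ℕ => M p / M (p + 1)) := by
  have hσ0 : σ ≠ 0 := by linarith
  have hM0 : M 0 = 1 := by
    rw [hM 0]
    simp [Real.zero_rpow hσ0]
  have hMpos : ∀ p : ℕ, 0 < M p := by
    intro p
    rcases Nat.eq_zero_or_pos p with h | h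
    · rw [h, hM0]; norm_num
    · rw [hM p]
      have : (0:ℝ) < (p:ℝ) := by exact_mod_cast h
      positivity
  have main : ∀ p : ℕ, 1 ≤ p →
      M (p - 1) / M p ≤ ((2 * p : ℕ) : ℝ) ^ (-(τ * ((p : ℝ) - 1) ^ (σ - 1))) := by
    intro p hp
    rcases eq_or_lt_of_le hp with h1 | h2
    · -- p = 1
      have hp1 : p = 1 := h1.symm
      subst hp1
      rw [show (1:ℕ) - 1 = 0 from rfl, hM0, hM 1]
      norm_num
      rw [Real.zero_rpow (by linarith : σ - 1 ≠ 0)]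
      norm_num
    · -- p ≥ 2
      have hp2 : 2 ≤ p := h2
      have hP : (2:ℝ) ≤ (p:ℝ) := by exact_mod_cast hp2
      have hP0 : (0:ℝ) < (p:ℝ) := by linarith
      have hQ : (1:ℝ) ≤ (p:ℝ) - 1 := by linarith
      have hQ0 : (0:ℝ) < (p:ℝ) - 1 := by linarith
      have hcast : ((p - 1 : ℕ) : ℝ) = (p:ℝ) - 1 := by
        have := Nat.cast_sub hp (R := ℝ)
        simpa using this
      have hc2 : ((2 * p : ℕ) : ℝ) = 2 * (p:ℝ) := by push_cast; ring
      rw [hM (p-1), hM p, hcast, hc2]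
      have hpos1 : (0:ℝ) < ((p:ℝ) - 1) ^ (τ * ((p:ℝ) - 1) ^ σ) / (p:ℝ) ^ (τ * (p:ℝ) ^ σ) := by
        positivity
      have hpos2 : (0:ℝ) < (2 * (p:ℝ)) ^ (-(τ * ((p:ℝ) - 1) ^ (σ - 1))) := by positivity
      rw [← Real.log_le_log_iff hpos1 hpos2, Real.log_div (by positivity) (by positivity),
        Real.log_rpow hQ0, Real.log_rpow hP0, Real.log_rpow (by linarith)]
      have hkey := aux_key hσ hP
      nlinarith [mul_le_mul_of_nonneg_left hkey hτ.le]
  refine ⟨main, ?_⟩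
  -- summability
  have htend : Tendsto (fun p : ℕ => ((p:ℝ)) ^ (σ - 1)) atTop atTop :=
    (tendsto_rpow_atTop (by linarith)).comp tendsto_natCast_atTop_atTop
  have hev : ∀ᶠ p : ℕ in atTop, 2 / τ ≤ ((p:ℝ)) ^ (σ - 1) :=
    htend.eventually_ge_atTop _
  have hbound : ∀ᶠ p : ℕ in atTop,
      ‖M p / M (p+1)‖ ≤ 1 * ‖((p:ℝ)) ^ (-2 : ℝ)‖ := by
    filter_upwards [hev, eventually_ge_atTop 1] with p h2τ hp1
    have hP0 : (0:ℝ) < (p:ℝ) := by exact_mod_cast hp1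
    have h1 := main (p+1) (by omega)
    have hcast : ((p + 1 : ℕ) - 1 : ℕ) = p := by omega
    have hcast2 : (((p:ℕ)+1 : ℕ) : ℝ) - 1 = (p:ℝ) := by push_cast; ring
    rw [hcast, hcast2] at h1
    have hbase : (1:ℝ) ≤ ((2 * (p+1) : ℕ) : ℝ) := by
      have : (1:ℕ) ≤ 2 * (p+1) := by omega
      exact_mod_cast this
    have hτp : 2 ≤ τ * ((p:ℝ)) ^ (σ - 1) := by
      have := mul_le_mul_of_nonneg_left h2τ hτ.le
      rw [mul_div_cancel₀ _ hτ.ne'] at this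
      linarith
    have h2 : ((2 * (p+1) : ℕ) : ℝ) ^ (-(τ * ((p:ℝ)) ^ (σ - 1)))
        ≤ ((2 * (p+1) : ℕ) : ℝ) ^ (-2 : ℝ) :=
      Real.rpow_le_rpow_of_exponent_le hbase (by linarith)
    have h3 : ((2 * (p+1) : ℕ) : ℝ) ^ (-2 : ℝ) ≤ ((p:ℝ)) ^ (-2 : ℝ) := by
      have hle : (p:ℝ) ≤ ((2 * (p+1) : ℕ) : ℝ) := by
        have : p ≤ 2 * (p+1) := by omega
        exact_mod_cast this
      rw [Real.rpow_neg (by linarith), Real.rpow_neg hP0.le]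
      apply inv_anti₀ (by positivity)
      exact Real.rpow_le_rpow hP0.le hle (by norm_num)
    have hnn : 0 ≤ M p / M (p+1) := le_of_lt (div_pos (hMpos p) (hMpos (p+1)))
    rw [Real.norm_eq_abs, Real.norm_eq_abs, abs_of_nonneg hnn,
      abs_of_nonneg (by positivity : (0:ℝ) ≤ ((p:ℝ)) ^ (-2:ℝ)), one_mul]
    calc M p / M (p+1) ≤ _ := h1
      _ ≤ _ := h2
      _ ≤ _ := h3
  have hg : Summable (fun p : ℕ => ((p:ℝ)) ^ (-2 : ℝ)) :=
    Real.summable_nat_rpow.mpr (by norm_num)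
  exact summable_of_isBigO_nat hg (Asymptotics.IsBigO.of_bound 1 hbound)
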